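/- Let n ≥ 1, let R be the free ℤ-module with basis (E_ν)_{ν∈ℤ^n}, multiplication E_ν·E_{ν′} = E_{ν+ν′} if (ν_i−ν_j)(ν′_i−ν′_j) ≥ 0 for all i,j and 0 otherwise, and S_n acting by ring automorphisms σ(E_ν) = E_{σ·ν}. For any σ ∈ S_n, the composite of the inclusion R^{S_n} ⊆ R with the chamber projection pr_σ : R → ℤ[M_σ] (where M_σ = {ν : ν_{σ(1)} ≤ … ≤ ν_{σ(n)}} and pr_σ(E_ν) = e^ν if ν ∈ M_σ, else 0) is an isomorphism of rings R^{S_n} ≅ ℤ[M_σ]. -/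

import Mathlib

/-- `ν` and `ν'` are chamber-compatible: `(ν_i - ν_j)(ν'_i - ν'_j) ≥ 0` for all `i, j`. -/
def ChamberCompat {n : ℕ} (ν ν' : Fin n → ℤ) : Prop :=
  ∀ i j, 0 ≤ (ν i - ν j) * (ν' i - ν' j)

instance {n : ℕ} (ν ν' : Fin n → ℤ) : Decidable (ChamberCompat ν ν') :=
  inferInstanceAs (Decidable (∀ i j, 0 ≤ (ν i - ν j) * (ν' i - ν' j)))

/-- The multiplication on `R = ⊕_{ν ∈ ℤ^n} ℤ·E_ν`, with `E_ν = Finsupp.single ν 1`: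
`E_ν · E_{ν'} = E_{ν+ν'}` if `ν, ν'` are chamber-compatible, and `0` otherwise. -/
noncomputable def vmul {n : ℕ} (f g : (Fin n → ℤ) →₀ ℤ) : (Fin n → ℤ) →₀ ℤ :=
  f.sum fun ν a => g.sum fun ν' b =>
    if ChamberCompat ν ν' then Finsupp.single (ν + ν') (a * b) else 0

/-- The action of `σ ∈ S_n` on `R`: `σ(E_ν) = E_{σ·ν}` where `(σ·ν)_j = ν_{σ⁻¹(j)}`. -/
noncomputable def pact {n : ℕ} (σ : Equiv.Perm (Fin n)) :
    ((Fin n → ℤ) →₀ ℤ) →ₗ[ℤ] ((Fin n → ℤ) →₀ ℤ) :=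
  Finsupp.lmapDomain ℤ ℤ (fun ν : Fin n → ℤ => fun j => ν (σ⁻¹ j))

/-- The invariant ring `R^{S_n}`, as a ℤ-submodule of `R`. -/
noncomputable def invSub (n : ℕ) : Submodule ℤ ((Fin n → ℤ) →₀ ℤ) where
  carrier := {f | ∀ σ : Equiv.Perm (Fin n), pact σ f = f}
  add_mem' := fun ha hb σ => by rw [map_add, ha σ, hb σ]
  zero_mem' := fun σ => map_zero _
  smul_mem' := fun c f hf σ => by rw [map_smul, hf σ]

/-- The submonoid `M_σ = {ν : ν_{σ(1)} ≤ … ≤ ν_{σ(n)}}` of `ℤ^n`. -/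
def chamberMonoid {n : ℕ} (σ : Equiv.Perm (Fin n)) : AddSubmonoid (Fin n → ℤ) where
  carrier := {ν | Monotone fun i => ν (σ i)}
  add_mem' := fun ha hb => ha.add hb
  zero_mem' := monotone_const

open scoped Classical in
/-- The chamber projection `pr_σ : R → ℤ[M_σ]`, with `pr_σ(E_ν) = e^ν` if `ν ∈ M_σ`
and `pr_σ(E_ν) = 0` otherwise. -/
noncomputable def prj {n : ℕ} (σ : Equiv.Perm (Fin n)) (f : (Fin n → ℤ) →₀ ℤ) :
    AddMonoidAlgebra ℤ (chamberMonoid σ) :=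
  f.sum fun ν a =>
    if h : Monotone fun i => ν (σ i) then
      AddMonoidAlgebra.single (⟨ν, h⟩ : chamberMonoid σ) a else 0


section Helpers
variable {n : ℕ} (σ : Equiv.Perm (Fin n))

lemma prj_zero : prj σ 0 = 0 := Finsupp.sum_zero_index

lemma prj_add (f g : (Fin n → ℤ) →₀ ℤ) : prj σ (f + g) = prj σ f + prj σ g := by
  classical
  unfold prj
  apply Finsupp.sum_add_index'
  · intro ν; split <;> simp
  · intro ν b₁ b₂; split <;> simp [Finsupp.single_add]

/-- `prj σ` bundled as an `AddMonoidHom`. -/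
noncomputable def prjHom : ((Fin n → ℤ) →₀ ℤ) →+ AddMonoidAlgebra ℤ (chamberMonoid σ) :=
  AddMonoidHom.mk' (prj σ) (prj_add σ)

lemma prjHom_eq (f : (Fin n → ℤ) →₀ ℤ) : prjHom σ f = prj σ f := rfl

lemma prj_single_pos {ν : Fin n → ℤ} (h : Monotone fun i => ν (σ i)) (a : ℤ) :
    prj σ (Finsupp.single ν a) = AddMonoidAlgebra.single (⟨ν, h⟩ : chamberMonoid σ) a := by
  classical
  unfold prj
  rw [Finsupp.sum_single_index, dif_pos h]
  split <;> simp

lemma prj_single_neg {ν : Fin n → ℤ} (h : ¬ Monotone fun i => ν (σ i)) (a : ℤ) :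
    prj σ (Finsupp.single ν a) = 0 := by
  classical
  unfold prj
  rw [Finsupp.sum_single_index, dif_neg h]
  split <;> simp

lemma compat_of_mono {ν ν' : Fin n → ℤ} (h : Monotone fun i => ν (σ i))
    (h' : Monotone fun i => ν' (σ i)) : ChamberCompat ν ν' := by
  intro i j
  rcases le_total (σ⁻¹ i) (σ⁻¹ j) with hij | hij
  · have h1 : ν i ≤ ν j := by simpa using h hij
    have h2 : ν' i ≤ ν' j := by simpa using h' hij
    nlinarith
  · have h1 : ν j ≤ ν i := by simpa using h hij
    have h2 : ν' j ≤ ν' i := by simpa using h' hij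
    nlinarith

lemma mono_of_compat {ν ν' : Fin n → ℤ} (hc : ChamberCompat ν ν')
    (hs : Monotone fun i => (ν + ν') (σ i)) :
    (Monotone fun i => ν (σ i)) ∧ (Monotone fun i => ν' (σ i)) := by
  constructor <;> intro i j hij <;>
  · have h1 := hc (σ i) (σ j)
    have h2 : ν (σ i) + ν' (σ i) ≤ ν (σ j) + ν' (σ j) := by simpa using hs hij
    nlinarith

lemma prj_piece (ν ν' : Fin n → ℤ) (a b : ℤ) :
    prj σ (if ChamberCompat ν ν' then Finsupp.single (ν + ν') (a * b) else 0) =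
      prj σ (Finsupp.single ν a) * prj σ (Finsupp.single ν' b) := by
  classical
  by_cases hν : Monotone fun i => ν (σ i) <;>
    by_cases hν' : Monotone fun i => ν' (σ i)
  · have hc : ChamberCompat ν ν' := compat_of_mono σ hν hν'
    have hs : Monotone fun i => (ν + ν') (σ i) := fun i j hij =>
      add_le_add (hν hij) (hν' hij)
    rw [if_pos hc, prj_single_pos σ hs, prj_single_pos σ hν, prj_single_pos σ hν',
      AddMonoidAlgebra.single_mul_single]
    rfl
  · rw [prj_single_neg σ hν', mul_zero]
    split_ifs with hc
    · exact prj_single_neg σ (fun hs => hν' (mono_of_compat σ hc hs).2) _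
    · exact prj_zero σ
  · rw [prj_single_neg σ hν, zero_mul]
    split_ifs with hc
    · exact prj_single_neg σ (fun hs => hν (mono_of_compat σ hc hs).1) _
    · exact prj_zero σ
  · rw [prj_single_neg σ hν, zero_mul]
    split_ifs with hc
    · exact prj_single_neg σ (fun hs => hν (mono_of_compat σ hc hs).1) _
    · exact prj_zero σ

lemma prj_eq_sum (f : (Fin n → ℤ) →₀ ℤ) :
    prj σ f = f.sum fun ν a => prj σ (Finsupp.single ν a) := by
  conv_lhs => rw [← Finsupp.sum_single f]
  rw [← prjHom_eq, map_finsuppSum]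
  rfl

lemma prj_mul (f g : (Fin n → ℤ) →₀ ℤ) : prj σ (vmul f g) = prj σ f * prj σ g := by
  rw [vmul, ← prjHom_eq, map_finsuppSum]
  simp only [map_finsuppSum, prjHom_eq, prj_piece σ]
  rw [prj_eq_sum σ f, prj_eq_sum σ g, Finsupp.sum_mul]
  exact Finsupp.sum_congr fun ν _ => (Finsupp.mul_sum _ _).symm

lemma prj_one : prj σ (Finsupp.single 0 1) = 1 := by
  rw [prj_single_pos σ monotone_const, AddMonoidAlgebra.one_def]
  rfl

lemma prj_apply (f : (Fin n → ℤ) →₀ ℤ) (m : chamberMonoid σ) :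
    (prj σ f).coeff m = f m.1 := by
  classical
  rw [prj, AddMonoidAlgebra.coeff_finsuppSum, Finsupp.sum_apply, Finsupp.sum, Finset.sum_eq_single m.1]
  · split
    · simp [AddMonoidAlgebra.coeff_single, Finsupp.single_apply]
    · exact absurd m.2 ‹_›
  · intro ν _ hne
    split
    · rw [AddMonoidAlgebra.coeff_single, Finsupp.single_apply, if_neg (fun hcon => hne (congrArg Subtype.val hcon))]
    · rfl
  · intro hns
    rw [Finsupp.notMem_support_iff.mp hns]
    split <;> simp

lemma inv_coeff {f : (Fin n → ℤ) →₀ ℤ} (hf : f ∈ invSub n) (ρ : Equiv.Perm (Fin n))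
    (ν : Fin n → ℤ) : f (ν ∘ ⇑ρ) = f ν := by
  have h := hf ρ⁻¹
  have hinj : Function.Injective (fun μ : Fin n → ℤ => fun j => μ ((ρ⁻¹)⁻¹ j)) := by
    intro μ₁ μ₂ hμ
    funext x
    simpa using congrFun hμ (ρ⁻¹ x)
  have := Finsupp.mapDomain_apply hinj f ν
  rw [show Finsupp.mapDomain (fun μ : Fin n → ℤ => fun j => μ ((ρ⁻¹)⁻¹ j)) f
      = pact ρ⁻¹ f from rfl, h] at this
  rw [← this]
  congr 1

/-- Injectivity of `prj σ` on invariants. -/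
lemma prj_inj {f g : (Fin n → ℤ) →₀ ℤ} (hf : f ∈ invSub n) (hg : g ∈ invSub n)
    (h : prj σ f = prj σ g) : f = g := by
  ext ν
  set s := Tuple.sort ν with hs
  set τ : Equiv.Perm (Fin n) := σ⁻¹.trans s with hτ
  have hmono : Monotone fun i => (ν ∘ ⇑τ) (σ i) := by
    have : (fun i => (ν ∘ ⇑τ) (σ i)) = ν ∘ ⇑s := by
      funext i
      simp [hτ, Equiv.trans]
    rw [this]
    exact Tuple.monotone_sort ν
  have h1 : f (ν ∘ ⇑τ) = g (ν ∘ ⇑τ) := by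
    have := congrArg (fun p => p.coeff (⟨ν ∘ ⇑τ, hmono⟩ : chamberMonoid σ)) h
    simpa [prj_apply] using this
  calc f ν = f (ν ∘ ⇑τ) := (inv_coeff hf τ ν).symm
    _ = g (ν ∘ ⇑τ) := h1
    _ = g ν := inv_coeff hg τ ν

open scoped Classical in
/-- The orbit of `μ` under the `S_n`-action, as a finset. -/
noncomputable def orb (μ : Fin n → ℤ) : Finset (Fin n → ℤ) :=
  Finset.image (fun τ : Equiv.Perm (Fin n) => μ ∘ ⇑τ) Finset.univ

lemma mem_orb {μ ν : Fin n → ℤ} : ν ∈ orb μ ↔ ∃ τ : Equiv.Perm (Fin n), μ ∘ ⇑τ = ν := by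
  simp [orb]

/-- The orbit sum `∑_{ν ∈ S_n·μ} a·E_ν`. -/
noncomputable def orbSum (μ : Fin n → ℤ) (a : ℤ) : (Fin n → ℤ) →₀ ℤ :=
  ∑ ν ∈ orb μ, Finsupp.single ν a

lemma orbSum_mem (μ : Fin n → ℤ) (a : ℤ) : orbSum μ a ∈ invSub n := by
  intro ρ
  rw [orbSum, map_sum]
  have hterm : ∀ ν : Fin n → ℤ,
      pact ρ (Finsupp.single ν a) = Finsupp.single (ν ∘ ⇑ρ⁻¹) a := by
    intro ν
    rw [pact, Finsupp.lmapDomain_apply, Finsupp.mapDomain_single]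
    rfl
  simp_rw [hterm]
  refine Finset.sum_nbij' (i := fun ν => ν ∘ ⇑ρ⁻¹) (j := fun ν => ν ∘ ⇑ρ) ?_ ?_ ?_ ?_ ?_
  · intro ν hν
    obtain ⟨τ, hτ⟩ := mem_orb.mp hν
    exact mem_orb.mpr ⟨ρ⁻¹.trans τ, by funext x; rw [← hτ]; rfl⟩
  · intro ν hν
    obtain ⟨τ, hτ⟩ := mem_orb.mp hν
    exact mem_orb.mpr ⟨ρ.trans τ, by funext x; rw [← hτ]; rfl⟩
  · intro ν _
    funext x
    simp
  · intro ν _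
    funext x
    simp
  · intro ν _
    rfl

lemma prj_orbSum {μ : Fin n → ℤ} (h : Monotone fun i => μ (σ i)) (a : ℤ) :
    prj σ (orbSum μ a) = AddMonoidAlgebra.single (⟨μ, h⟩ : chamberMonoid σ) a := by
  classical
  rw [orbSum, ← prjHom_eq, map_sum]
  simp_rw [prjHom_eq]
  rw [Finset.sum_eq_single_of_mem μ (mem_orb.mpr ⟨1, by funext x; rfl⟩)]
  · exact prj_single_pos σ h a
  · intro ν hν hne
    obtain ⟨τ, hτ⟩ := mem_orb.mp hν
    by_cases hm : Monotone fun i => ν (σ i)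
    · exfalso
      apply hne
      have hm' : Monotone (μ ∘ ⇑(σ.trans τ)) := by
        have : (μ ∘ ⇑(σ.trans τ)) = fun i => ν (σ i) := by
          funext i
          rw [← hτ]
          rfl
        rw [this]
        exact hm
      have huniq := Tuple.unique_monotone (f := μ) (σ := σ.trans τ) (τ := σ) hm' h
      funext j
      have := congrFun huniq (σ⁻¹ j)
      simp only [Function.comp_apply, Equiv.trans_apply, Equiv.Perm.inv_def, Equiv.apply_symm_apply] at this
      rw [← hτ]
      exact this
    · exact prj_single_neg σ hm a

lemma prj_surj : ∀ g : AddMonoidAlgebra ℤ (chamberMonoid σ),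
    ∃ f ∈ invSub n, prj σ f = g := by
  intro g
  induction g using AddMonoidAlgebra.induction with
  | zero => exact ⟨0, (invSub n).zero_mem, prj_zero σ⟩
  | single_add m b g' _ _ ih =>
    obtain ⟨f', hf', hpf'⟩ := ih
    refine ⟨orbSum m.1 b + f', (invSub n).add_mem (orbSum_mem m.1 b) hf', ?_⟩
    rw [prj_add, prj_orbSum σ m.2, hpf']

end Helpers

/-- The composite `R^{S_n} ⊆ R → ℤ[M_σ]` of the inclusion of the invariants with the
chamber projection `pr_σ` is an isomorphism of rings (`pr_σ` is a ring homomorphism and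
its restriction to the invariants is bijective). -/
theorem stmt8 (n : ℕ) (hn : 1 ≤ n) (σ : Equiv.Perm (Fin n)) :
    Function.Bijective (fun f : invSub n => prj σ (f : (Fin n → ℤ) →₀ ℤ)) ∧
    (∀ f g : (Fin n → ℤ) →₀ ℤ, prj σ (vmul f g) = prj σ f * prj σ g) ∧
    (∀ f g : (Fin n → ℤ) →₀ ℤ, prj σ (f + g) = prj σ f + prj σ g) ∧
    prj σ (Finsupp.single 0 1) = 1 := by
  refine ⟨⟨?_, ?_⟩, prj_mul σ, prj_add σ, prj_one σ⟩
  · intro f g h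
    exact Subtype.ext (prj_inj σ f.2 g.2 h)
  · intro g
    obtain ⟨f, hf, hpf⟩ := prj_surj σ g
    exact ⟨⟨f, hf⟩, hpf⟩
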